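/- If S is a ∪-basis of a core compact space X, then the way-below relation ⋐ on S satisfies interpolation: for p, q ∈ S with p ⋐ q there exists s ∈ S with p ⋐ s ⋐ q. -/

import Mathlib

variable {S : Type*} [SemilatticeSup S] [OrderBot S]

/-- A (nonempty) filter: an up-set in which any two elements have a common lower bound. -/
def IsFilt (F : Set S) : Prop :=
  F.Nonempty ∧ (∀ p ∈ F, ∀ q, p ≤ q → q ∈ F) ∧
    ∀ p ∈ F, ∀ q ∈ F, ∃ t ∈ F, t ≤ p ∧ t ≤ q

/-- A filter is round if every member has a `r`-predecessor in the filter. -/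
def IsRound (r : S → S → Prop) (F : Set S) : Prop :=
  ∀ p ∈ F, ∃ t ∈ F, r t p

/-- Primeness: `p ⊔ q ∈ P` implies `p ∈ P` or `q ∈ P`. -/
def IsPrimeFilt (P : Set S) : Prop :=
  ∀ p q, p ⊔ q ∈ P → p ∈ P ∨ q ∈ P

/-- The spectrum: proper round prime filters. -/
def Spec (r : S → S → Prop) : Type _ :=
  {P : Set S // IsFilt P ∧ IsRound r P ∧ IsPrimeFilt P ∧ ⊥ ∉ P}

/-- The basic open set `Ŝ_p`. -/
def basicOpen (r : S → S → Prop) (p : S) : Set (Spec r) :=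
  {P | p ∈ P.1}

instance specTop (r : S → S → Prop) : TopologicalSpace (Spec r) :=
  TopologicalSpace.generateFrom (Set.range (basicOpen r))

/-- Distributivity of `r`. -/
def IsDistrib (r : S → S → Prop) : Prop :=
  ∀ p s t, r p (s ⊔ t) → ∀ p', r p' p →
    ∃ s' t', r s' s ∧ r t' t ∧ p' ≤ s' ⊔ t' ∧ s' ⊔ t' ≤ p

/-- `r` is auxiliary. -/
def IsAux (r : S → S → Prop) : Prop :=
  (∀ p p' q' q, p ≤ p' → r p' q' → q' ≤ q → r p q) ∧ ∀ p q, r p q → p ≤ q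

/-- `r` is interpolative. -/
def IsInterp (r : S → S → Prop) : Prop :=
  ∀ p q, r p q → ∃ s, r p s ∧ r s q

/-- `r` is approximating: `≤` is the lower preorder of `r`. -/
def IsApprox (r : S → S → Prop) : Prop :=
  ∀ p q, p ≤ q ↔ ∀ t, r t p → r t q

/-- `r` is `∨`-preserving. -/
def IsSupPres (r : S → S → Prop) : Prop :=
  ∀ p p' q q', r p' p → r q' q → r (p' ⊔ q') (p ⊔ q)

/-- `S` with `r` is a `∨`-predomain. -/
def IsPredom (r : S → S → Prop) : Prop :=
  IsAux r ∧ IsApprox r ∧ IsInterp r ∧ IsSupPres r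

/-- Ideal: downward closed and closed under pairwise joins. -/
def IsIdl (I : Set S) : Prop :=
  (∀ p ∈ I, ∀ q, q ≤ p → q ∈ I) ∧ ∀ p ∈ I, ∀ q ∈ I, p ⊔ q ∈ I

/-- The way-below relation on subsets of a topological space:
every open cover of `q` has a finite subcover of `p`. -/
def WayBelow {X : Type*} [TopologicalSpace X] (p q : Set X) : Prop :=
  ∀ C : Set (Set X), (∀ U ∈ C, IsOpen U) → q ⊆ ⋃₀ C →
    ∃ F ⊆ C, F.Finite ∧ p ⊆ ⋃₀ F

/-- Core compactness. -/
def CoreCompact (X : Type*) [TopologicalSpace X] : Prop :=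
  ∀ (x : X) (U : Set X), IsOpen U → x ∈ U → ∃ V, IsOpen V ∧ x ∈ V ∧ WayBelow V U

/-- A `∪`-basis: a basis containing `∅` and closed under pairwise unions. -/
def IsUnionBasis {X : Type*} [TopologicalSpace X] (B : Set (Set X)) : Prop :=
  TopologicalSpace.IsTopologicalBasis B ∧ ∅ ∈ B ∧ ∀ p ∈ B, ∀ q ∈ B, p ∪ q ∈ B


section Aux
variable {X : Type*} [TopologicalSpace X]

theorem wb_mono {p' p q q' : Set X} (h : WayBelow p q) (hp : p' ⊆ p) (hq : q ⊆ q') :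
    WayBelow p' q' := by
  intro C hC hcov
  obtain ⟨F, hF, hfin, hsub⟩ := h C hC (hq.trans hcov)
  exact ⟨F, hF, hfin, hp.trans hsub⟩

theorem wb_sUnion {T : Set (Set X)} (hT : T.Finite) {q : Set X}
    (h : ∀ t ∈ T, WayBelow t q) : WayBelow (⋃₀ T) q := by
  refine Set.Finite.induction_on
    (motive := fun T _ => (∀ t ∈ T, WayBelow t q) → WayBelow (⋃₀ T) q) T hT ?_ ?_ h
  · intro _ C hC hcov; exact ⟨∅, Set.empty_subset _, Set.finite_empty, by simp⟩
  · intro a t _ _ ih h C hC hcov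
    obtain ⟨F1, hF1, hfin1, hsub1⟩ := h a (Set.mem_insert _ _) C hC hcov
    obtain ⟨F2, hF2, hfin2, hsub2⟩ :=
      ih (fun u hu => h u (Set.mem_insert_of_mem _ hu)) C hC hcov
    refine ⟨F1 ∪ F2, Set.union_subset hF1 hF2, hfin1.union hfin2, ?_⟩
    rw [Set.sUnion_insert]
    exact Set.union_subset (hsub1.trans (Set.sUnion_mono Set.subset_union_left))
      (hsub2.trans (Set.sUnion_mono Set.subset_union_right))

theorem basis_sUnion_mem {B : Set (Set X)} (hB : IsUnionBasis B) {T : Set (Set X)}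
    (hT : T.Finite) (hTB : T ⊆ B) : ⋃₀ T ∈ B := by
  refine Set.Finite.induction_on (motive := fun T _ => T ⊆ B → ⋃₀ T ∈ B) T hT ?_ ?_ hTB
  · intro _; simpa using hB.2.1
  · intro a t _ _ ih hTB
    rw [Set.sUnion_insert]
    exact hB.2.2 _ (hTB (Set.mem_insert _ _)) _
      (ih fun u hu => hTB (Set.mem_insert_of_mem _ hu))

end Aux

theorem stmt9 {X : Type*} [TopologicalSpace X] (hcc : CoreCompact X)
    (B : Set (Set X)) (hB : IsUnionBasis B) (p q : Set X)
    (hp : p ∈ B) (hq : q ∈ B) (h : WayBelow p q) :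
    ∃ s ∈ B, WayBelow p s ∧ WayBelow s q := by
  have hqo : IsOpen q := hB.1.isOpen hq
  -- key step: around each point of q find an open U way-below a finite union of
  -- basis elements which is itself way-below q
  have key : ∀ x ∈ q, ∃ U, IsOpen U ∧ x ∈ U ∧
      ∃ G, G ⊆ B ∧ G.Finite ∧ WayBelow U (⋃₀ G) ∧ WayBelow (⋃₀ G) q := by
    intro x hx
    obtain ⟨V, hVo, hxV, hVq⟩ := hcc x q hqo hx
    obtain ⟨W, hWo, hxW, hWV⟩ := hcc x V hVo hxV
    obtain ⟨U, hUo, hxU, hUW⟩ := hcc x W hWo hxW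
    obtain ⟨T, hTB, hVT⟩ := hB.1.open_eq_sUnion hVo
    obtain ⟨G, hGT, hGfin, hWG⟩ :=
      hWV T (fun u hu => hB.1.isOpen (hTB hu)) hVT.le
    have hGV : ⋃₀ G ⊆ V := (Set.sUnion_mono hGT).trans hVT.ge
    exact ⟨U, hUo, hxU, G, hGT.trans hTB, hGfin,
      wb_mono hUW subset_rfl hWG, wb_mono hVq hGV subset_rfl⟩
  set C : Set (Set X) :=
    {u | IsOpen u ∧ ∃ G, G ⊆ B ∧ G.Finite ∧ WayBelow u (⋃₀ G) ∧ WayBelow (⋃₀ G) q} with hC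
  obtain ⟨F, hFC, hFfin, hpF⟩ := h C (fun u hu => hu.1) (by
    intro x hx
    obtain ⟨U, hUo, hxU, hG⟩ := key x hx
    exact ⟨U, ⟨hUo, hG⟩, hxU⟩)
  have hchoice : ∀ f : F, ∃ G, G ⊆ B ∧ G.Finite ∧ WayBelow f.1 (⋃₀ G) ∧ WayBelow (⋃₀ G) q :=
    fun f => (hFC f.2).2
  choose 𝒢 h𝒢B h𝒢fin h𝒢wb h𝒢q using hchoice
  haveI : Finite F := hFfin.to_subtype
  refine ⟨⋃₀ (⋃ f : F, 𝒢 f), basis_sUnion_mem hB (Set.finite_iUnion h𝒢fin)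
    (Set.iUnion_subset h𝒢B), ?_, ?_⟩
  · refine wb_mono (wb_sUnion hFfin ?_) hpF subset_rfl
    rintro t ht
    exact wb_mono (h𝒢wb ⟨t, ht⟩) subset_rfl
      (Set.sUnion_mono (Set.subset_iUnion (fun f : F => 𝒢 f) ⟨t, ht⟩))
  · have : ⋃₀ (⋃ f : F, 𝒢 f) = ⋃₀ Set.range (fun f : F => ⋃₀ 𝒢 f) := by
      rw [Set.sUnion_range, Set.sUnion_iUnion]
    rw [this]
    refine wb_sUnion (Set.finite_range _) ?_
    rintro t ⟨f, rfl⟩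
    exact h𝒢q f
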